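/- (MacWilliams identity for split complete weight enumerators) Let C be an F_q-linear code of length n, χ a non-trivial additive character of F_q, and X_1,…,X_ℓ pairwise disjoint subsets with X_1 ⊔ ⋯ ⊔ X_ℓ = {1,…,n}. Define scwe_{C,X_1,…,X_ℓ} := Σ_{u∈C} Π_{i=1}^{ℓ} Π_{a∈F_q} x_{X_i,a}^{n_{a,X_i}(u)}. Then scwe_{C^⊥,X_1,…,X_ℓ}({x_{X_i,a}}) = (1/|C|) · scwe_{C,X_1,…,X_ℓ}( { Σ_{b∈F_q} χ(ab) x_{X_i,b} }_{a∈F_q, 1≤i≤ℓ} ). -/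
import Mathlib


open Finset
open scoped Classical

noncomputable section

/-- `n_{a,X}(u) = #{ i ∈ X : u_i = a }`. -/
def count {F : Type*} {n : ℕ} (u : Fin n → F) (X : Finset (Fin n)) (a : F) : ℕ :=
  (X.filter (fun i => u i = a)).card

/-- The codewords of a linear code `C ⊆ F^n`, as a finset. -/
def codeFinset {F : Type*} [Field F] [Fintype F] {n : ℕ}
    (C : Submodule F (Fin n → F)) : Finset (Fin n → F) :=
  Finset.univ.filter (· ∈ C)

/-- The dual code `C^⊥ = {v : u·v = 0 for all u ∈ C}`, as a finset. -/
def dualFinset {F : Type*} [Field F] [Fintype F] {n : ℕ}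
    (C : Submodule F (Fin n → F)) : Finset (Fin n → F) :=
  Finset.univ.filter (fun v => ∀ u ∈ C, ∑ i, u i * v i = 0)

/-- An additive character of a sum is the product of the values. -/
lemma addChar_map_sum {A M : Type*} [AddCommMonoid A] [CommMonoid M] (χ : AddChar A M)
    {ι : Type*} (s : Finset ι) (f : ι → A) :
    χ (∑ j ∈ s, f j) = ∏ j ∈ s, χ (f j) := by
  induction s using Finset.cons_induction with
  | empty => simp [AddChar.map_zero_eq_one]
  | cons a s ha ih =>
      rw [Finset.sum_cons, Finset.prod_cons, AddChar.map_add_eq_mul, ih]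

/-- Regrouping a product over coordinates by values: the key rewriting of a
complete-weight-enumerator term. -/
lemma prod_count_eq {F : Type*} [Fintype F] {n ℓ : ℕ} (X : Fin ℓ → Finset (Fin n))
    (idx : Fin n → Fin ℓ) (hidx : ∀ i j, j ∈ X i → idx j = i)
    (hdisj : ∀ i j, i ≠ j → Disjoint (X i) (X j))
    (hunion : Finset.univ.biUnion X = Finset.univ)
    (y : Fin ℓ → F → ℂ) (v : Fin n → F) :
    ∏ i, ∏ a : F, y i a ^ count v (X i) a = ∏ j, y (idx j) (v j) := by
  have h1 : ∀ i, ∏ a : F, y i a ^ count v (X i) a = ∏ j ∈ X i, y i (v j) := by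
    intro i
    rw [← Finset.prod_fiberwise_of_maps_to (g := v) (t := Finset.univ)
      (fun j _ => Finset.mem_univ (v j)) (fun j => y i (v j))]
    refine Finset.prod_congr rfl fun a _ => ?_
    have : ∀ j ∈ (X i).filter (fun j => v j = a), y i (v j) = y i a := by
      intro j hj
      rw [(Finset.mem_filter.mp hj).2]
    rw [Finset.prod_congr rfl this, Finset.prod_const]
    rfl
  calc ∏ i, ∏ a : F, y i a ^ count v (X i) a
      = ∏ i, ∏ j ∈ X i, y (idx j) (v j) := by
        refine Finset.prod_congr rfl fun i _ => ?_
        rw [h1 i]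
        exact Finset.prod_congr rfl fun j hj => by rw [hidx i j hj]
    _ = ∏ j ∈ Finset.univ.biUnion X, y (idx j) (v j) := by
        rw [Finset.prod_biUnion]
        intro i _ j _ hij
        exact hdisj i j hij
    _ = ∏ j, y (idx j) (v j) := by rw [hunion]

/-- MacWilliams identity for split complete weight enumerators. -/
theorem scwe_macwilliams {F : Type*} [Field F] [Fintype F] {n ℓ : ℕ}
    (C : Submodule F (Fin n → F)) (χ : AddChar F ℂ) (hχ : χ ≠ 1)
    (X : Fin ℓ → Finset (Fin n))
    (hdisj : ∀ i j, i ≠ j → Disjoint (X i) (X j))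
    (hunion : Finset.univ.biUnion X = Finset.univ)
    (x : Fin ℓ → F → ℂ) :
    ∑ v ∈ dualFinset C, ∏ i, ∏ a : F, x i a ^ count v (X i) a =
      (1 / (Nat.card C : ℂ)) *
        ∑ u ∈ codeFinset C, ∏ i, ∏ a : F, (∑ b : F, χ (a * b) * x i b) ^ count u (X i) a := by
  -- the index map: each coordinate lies in a unique block
  have hex : ∀ j : Fin n, ∃ i, j ∈ X i := by
    intro j
    have := hunion ▸ Finset.mem_univ j
    simpa using Finset.mem_biUnion.mp this
  set idx : Fin n → Fin ℓ := fun j => Classical.choose (hex j) with hidxdef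
  have hidx0 : ∀ j, j ∈ X (idx j) := fun j => Classical.choose_spec (hex j)
  have hidx : ∀ i j, j ∈ X i → idx j = i := by
    intro i j hj
    by_contra h
    exact (Finset.disjoint_left.mp (hdisj _ _ h) (hidx0 j)) hj
  -- g v : the monomial attached to v
  set g : (Fin n → F) → ℂ := fun v => ∏ j, x (idx j) (v j) with hg
  -- cardinality facts
  have hcard : (Nat.card C : ℂ) = (codeFinset C).card := by
    rw [Nat.card_eq_fintype_card, Fintype.card_subtype]
    rfl
  have hCne : (Nat.card C : ℂ) ≠ 0 := by
    rw [hcard]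
    exact_mod_cast Finset.card_ne_zero_of_mem (by simp [codeFinset] : 0 ∈ codeFinset C)
  -- transform the RHS summand
  have hrhs : ∀ u ∈ codeFinset C,
      ∏ i, ∏ a : F, (∑ b : F, χ (a * b) * x i b) ^ count u (X i) a
        = ∑ v : Fin n → F, χ (∑ j, u j * v j) * g v := by
    intro u _
    rw [prod_count_eq X idx hidx hdisj hunion (fun i a => ∑ b : F, χ (a * b) * x i b) u]
    rw [Finset.prod_univ_sum]
    rw [Fintype.piFinset_univ]
    refine Finset.sum_congr rfl fun v _ => ?_
    rw [addChar_map_sum, hg]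
    rw [← Finset.prod_mul_distrib]
  -- character orthogonality: inner sum over the code
  have horth : ∀ v : Fin n → F,
      ∑ u ∈ codeFinset C, χ (∑ j, u j * v j)
        = if v ∈ dualFinset C then (Nat.card C : ℂ) else 0 := by
    intro v
    by_cases hv : v ∈ dualFinset C
    · rw [if_pos hv]
      have : ∀ u ∈ codeFinset C, χ (∑ j, u j * v j) = 1 := by
        intro u hu
        have hu' : u ∈ C := (Finset.mem_filter.mp hu).2
        have := (Finset.mem_filter.mp hv).2 u hu'
        rw [this, AddChar.map_zero_eq_one]
      rw [Finset.sum_congr rfl this, Finset.sum_const, hcard]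
      simp
    · rw [if_neg hv]
      -- build the character ψ on C
      set φ : C →+ F :=
        { toFun := fun u => ∑ j, (u : Fin n → F) j * v j
          map_zero' := by simp
          map_add' := by
            intro a b
            simp [add_mul, Finset.sum_add_distrib] }
      set ψ : AddChar C ℂ := χ.compAddMonoidHom φ with hψ
      have hsum : ∑ u ∈ codeFinset C, χ (∑ j, u j * v j) = ∑ u : C, ψ u := by
        rw [Finset.sum_subtype (p := (· ∈ C)) (codeFinset C)
          (fun u => by simp [codeFinset]) (fun u => χ (∑ j, u j * v j))]
        rfl
      rw [hsum]
      -- ψ is nontrivial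
      have hψne : ψ ≠ 0 := by
        rw [AddChar.ne_zero_iff]
        obtain ⟨c, hc⟩ := AddChar.ne_one_iff.mp hχ
        obtain ⟨u0, hu0C, hu0⟩ : ∃ u0 ∈ C, ∑ j, u0 j * v j ≠ 0 := by
          by_contra h
          push_neg at h
          exact hv (Finset.mem_filter.mpr ⟨Finset.mem_univ v, h⟩)
        set d := ∑ j, u0 j * v j with hd
        refine ⟨⟨(c / d) • u0, C.smul_mem _ hu0C⟩, ?_⟩
        have : φ ⟨(c / d) • u0, C.smul_mem _ hu0C⟩ = c := by
          simp only [φ, AddMonoidHom.coe_mk, ZeroHom.coe_mk]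
          rw [show (((c / d) • u0 : Fin n → F)) = fun j => (c / d) * u0 j from rfl]
          simp_rw [mul_assoc, ← Finset.mul_sum, ← hd]
          field_simp
        rw [hψ, AddChar.compAddMonoidHom_apply, this]
        exact hc
      rw [AddChar.sum_eq_zero_iff_ne_zero.mpr hψne]
  -- main computation
  rw [Finset.sum_congr rfl hrhs, Finset.sum_comm]
  have : ∀ v : Fin n → F,
      ∑ u ∈ codeFinset C, χ (∑ j, u j * v j) * g v
        = (if v ∈ dualFinset C then (Nat.card C : ℂ) else 0) * g v := by
    intro v
    rw [← Finset.sum_mul, horth v]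
  rw [Finset.sum_congr rfl (fun v _ => this v)]
  rw [Finset.mul_sum]
  have : ∀ v : Fin n → F,
      (1 / (Nat.card C : ℂ)) * ((if v ∈ dualFinset C then (Nat.card C : ℂ) else 0) * g v)
        = if v ∈ dualFinset C then g v else 0 := by
    intro v
    split_ifs with h
    · field_simp
    · simp
  rw [Finset.sum_congr rfl (fun v _ => this v), Finset.sum_ite_mem, Finset.univ_inter]
  exact Finset.sum_congr rfl fun v _ => prod_count_eq X idx hidx hdisj hunion x v
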